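/- Suppose L ⊆ S* defines a quasiregular normal form of G with constant c ≥ 0 which satisfies the f(n)-fellow traveler property. Then there exists a language L' ⊆ S* defining a quasiprefix-closed normal form of G with constant C = 4c which also satisfies the f(n)-fellow traveler property. -/

import Mathlib

/-- The alphabet `S = A ∪ A⁻¹` for a generating tuple of `m` elements:
a letter is a generator index together with a sign (`true` = the generator,
`false` = its inverse). -/
abbrev Letter (m : ℕ) := Fin m × Bool

/-- Evaluation of a letter in the group. -/
def evalLetter {G : Type*} [Group G] {m : ℕ} (A : Fin m → G) (l : Letter m) : G :=
  if l.2 then A l.1 else (A l.1)⁻¹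

/-- The canonical projection `π : S* → G`. -/
def wordEval {G : Type*} [Group G] {m : ℕ} (A : Fin m → G) (w : List (Letter m)) : G :=
  (w.map (evalLetter A)).prod

/-- The word metric `d_A` on `G` relative to `A`. -/
noncomputable def wordDist {G : Type*} [Group G] {m : ℕ} (A : Fin m → G) (g h : G) : ℕ :=
  sInf {n | ∃ w : List (Letter m), wordEval A w = g⁻¹ * h ∧ w.length = n}

/-- `L ⊆ S*` is a normal form of `G`: `π` restricted to `L` is a bijection onto `G`. -/
def IsNormalForm {G : Type*} [Group G] {m : ℕ} (A : Fin m → G)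
    (L : Set (List (Letter m))) : Prop :=
  ∀ g : G, ∃! w, w ∈ L ∧ wordEval A w = g

/-- The fellow-traveler function `s(n)` of a normal form `L`. -/
noncomputable def ftFun {G : Type*} [Group G] {m : ℕ} (A : Fin m → G)
    (L : Set (List (Letter m))) (n : ℕ) : ℕ :=
  sSup {d | ∃ t ≤ n, ∃ w₁ ∈ L, ∃ w₂ ∈ L, ∃ i : Fin m,
    wordEval A w₁ * A i = wordEval A w₂ ∧
    d = wordDist A (wordEval A (w₁.take t)) (wordEval A (w₂.take t))}

/-- `h ⪯ f` : there are positive integers `K, M` and `N₀ ≥ 0` with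
`h n ≤ K * f (M * n)` for all `n ≥ N₀`. -/
def FPreceq (h f : ℕ → ℝ) : Prop :=
  ∃ K M N₀ : ℕ, 0 < K ∧ 0 < M ∧ ∀ n ≥ N₀, h n ≤ (K : ℝ) * f (M * n)

/-- `h ≪ f` : there is an unbounded nondecreasing nonnegative function `t`
with `h·t ⪯ f`. -/
def FLl (h f : ℕ → ℝ) : Prop :=
  ∃ t : ℕ → ℝ, Monotone t ∧ (∀ n, 0 ≤ t n) ∧ (∀ C : ℝ, ∃ n, C < t n) ∧
    FPreceq (fun n => h n * t n) f

/-- A normal form is quasigeodesic if `|w| ≤ C (d_A(π(w)) + 1)` for all `w ∈ L`. -/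
def Quasigeodesic {G : Type*} [Group G] {m : ℕ} (A : Fin m → G)
    (L : Set (List (Letter m))) : Prop :=
  ∃ C : ℝ, 0 < C ∧ ∀ w ∈ L, (w.length : ℝ) ≤ C * ((wordDist A 1 (wordEval A w) : ℝ) + 1)

/-- A normal form is quasiregular with constant `c` if every prefix of a word of `L`
can be extended by a word of length at most `c` to a word of `L`. -/
def Quasiregular {m : ℕ} (L : Set (List (Letter m))) (c : ℕ) : Prop :=
  ∀ w ∈ L, ∀ u : List (Letter m), u <+: w → ∃ x : List (Letter m), x.length ≤ c ∧ u ++ x ∈ L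

/-- A normal form is quasiprefix-closed with constant `C`. -/
def QuasiPrefixClosed {m : ℕ} (L : Set (List (Letter m))) (C : ℕ) : Prop :=
  ∀ u v : List (Letter m), u ++ v ∈ L →
    ∃ x : List (Letter m), x <+: v ∧ x.length ≤ C ∧ u ++ x ∈ L

/-- A language is prefix-closed. -/
def PrefixClosed {m : ℕ} (L : Set (List (Letter m))) : Prop :=
  ∀ w ∈ L, ∀ u : List (Letter m), u <+: w → u ∈ L



namespace QRQPC

variable {G : Type*} [Group G] {m : ℕ} (A : Fin m → G)

theorem wordEval_nil : wordEval A ([] : List (Letter m)) = 1 := rfl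

theorem wordEval_append (u v : List (Letter m)) :
    wordEval A (u ++ v) = wordEval A u * wordEval A v := by
  simp [wordEval]

def invWord {m : ℕ} (w : List (Letter m)) : List (Letter m) :=
  (w.map (fun p => (p.1, !p.2))).reverse

@[simp] theorem length_invWord (w : List (Letter m)) :
    (invWord w).length = w.length := by simp [invWord]

theorem wordEval_invWord (w : List (Letter m)) :
    wordEval A (invWord w) = (wordEval A w)⁻¹ := by
  induction w with
  | nil => simp [invWord, wordEval]
  | cons a w ih =>
      have : invWord (a :: w) = invWord w ++ [(a.1, !a.2)] := by simp [invWord]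
      rw [this, wordEval_append, ih]
      have ha : wordEval A [(a.1, !a.2)] = (evalLetter A a)⁻¹ := by
        cases h : a.2 <;> simp [wordEval, evalLetter, h]
      have hc : wordEval A (a :: w) = evalLetter A a * wordEval A w := by
        simp [wordEval]
      rw [ha, hc, mul_inv_rev]

theorem wordDist_le {g h : G} {z : List (Letter m)} (hz : wordEval A z = g⁻¹ * h) :
    wordDist A g h ≤ z.length :=
  Nat.sInf_le ⟨z, hz, rfl⟩

theorem wordDist_self (g : G) : wordDist A g g = 0 :=
  Nat.le_zero.mp (wordDist_le A (z := []) (by simp [wordEval_nil]))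

theorem wordDist_exists (hsurj : ∀ g : G, ∃ w : List (Letter m), wordEval A w = g)
    (g h : G) : ∃ z : List (Letter m), wordEval A z = g⁻¹ * h ∧ z.length = wordDist A g h := by
  obtain ⟨w, hw⟩ := hsurj (g⁻¹ * h)
  exact Nat.sInf_mem (⟨w.length, w, hw, rfl⟩ :
    Set.Nonempty {n | ∃ w : List (Letter m), wordEval A w = g⁻¹ * h ∧ w.length = n})

theorem wordDist_symm (hsurj : ∀ g : G, ∃ w : List (Letter m), wordEval A w = g)
    (g h : G) : wordDist A g h = wordDist A h g := by
  have key : ∀ a b : G, wordDist A a b ≤ wordDist A b a := by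
    intro a b
    obtain ⟨z, hz, hlen⟩ := wordDist_exists A hsurj b a
    have : wordEval A (invWord z) = a⁻¹ * b := by
      rw [wordEval_invWord, hz]; group
    calc wordDist A a b ≤ (invWord z).length := wordDist_le A this
    _ = wordDist A b a := by rw [length_invWord, hlen]
  exact le_antisymm (key g h) (key h g)

theorem wordDist_triangle (hsurj : ∀ g : G, ∃ w : List (Letter m), wordEval A w = g)
    (g k h : G) : wordDist A g h ≤ wordDist A g k + wordDist A k h := by
  obtain ⟨z₁, hz₁, hl₁⟩ := wordDist_exists A hsurj g k
  obtain ⟨z₂, hz₂, hl₂⟩ := wordDist_exists A hsurj k h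
  have : wordEval A (z₁ ++ z₂) = g⁻¹ * h := by rw [wordEval_append, hz₁, hz₂]; group
  calc wordDist A g h ≤ (z₁ ++ z₂).length := wordDist_le A this
  _ = _ := by rw [List.length_append, hl₁, hl₂]

/-- distance from `g * wordEval A z` back to `g`. -/
theorem wordDist_mul_le (g : G) (z : List (Letter m)) :
    wordDist A (g * wordEval A z) g ≤ z.length := by
  have : wordEval A (invWord z) = (g * wordEval A z)⁻¹ * g := by
    rw [wordEval_invWord]; group
  simpa using wordDist_le A this

theorem wordDist_mul_le' (g : G) (z : List (Letter m)) :
    wordDist A g (g * wordEval A z) ≤ z.length :=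
  wordDist_le A (by group)


/-! ### representatives -/

noncomputable def rep {L : Set (List (Letter m))} (hL : IsNormalForm A L) (g : G) :
    List (Letter m) := (hL g).exists.choose

theorem rep_mem {L : Set (List (Letter m))} (hL : IsNormalForm A L) (g : G) :
    rep A hL g ∈ L := (hL g).exists.choose_spec.1

theorem rep_eval {L : Set (List (Letter m))} (hL : IsNormalForm A L) (g : G) :
    wordEval A (rep A hL g) = g := (hL g).exists.choose_spec.2

theorem rep_unique {L : Set (List (Letter m))} (hL : IsNormalForm A L) {g : G}
    {w : List (Letter m)} (hw : w ∈ L) (he : wordEval A w = g) : w = rep A hL g :=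
  (hL g).unique ⟨hw, he⟩ ⟨rep_mem A hL g, rep_eval A hL g⟩

/-! ### the padding construction -/

variable (L : Set (List (Letter m))) (c : ℕ) (i0 : Fin m)

open Classical in
noncomputable def extQ (u : List (Letter m)) : List (Letter m) :=
  if h : ∃ x : List (Letter m), x.length ≤ c ∧ u ++ x ∈ L then h.choose else []

theorem extQ_length (u : List (Letter m)) : (extQ L c u).length ≤ c := by
  unfold extQ
  classical
  split
  · next h => exact h.choose_spec.1
  · simp

theorem extQ_mem {u : List (Letter m)}
    (h : ∃ x : List (Letter m), x.length ≤ c ∧ u ++ x ∈ L) : u ++ extQ L c u ∈ L := by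
  unfold extQ
  classical
  rw [dif_pos h]
  exact h.choose_spec.2

/-- the detour word at a block: `x ++ (padding pairs) ++ x⁻¹`, of length exactly `2c`. -/
noncomputable def padD (u : List (Letter m)) : List (Letter m) :=
  extQ L c u ++ (List.replicate (c - (extQ L c u).length) [(i0, true), (i0, false)]).flatten
    ++ invWord (extQ L c u)

theorem length_padD (u : List (Letter m)) : (padD L c i0 u).length = 2 * c := by
  have h := extQ_length L c u
  simp only [padD, List.length_append, List.length_flatten, length_invWord]
  have : ((List.replicate (c - (extQ L c u).length) [(i0, true), (i0, false)]).map
      List.length).sum = 2 * (c - (extQ L c u).length) := by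
    simp [List.map_replicate, List.sum_replicate, Nat.smul_one_eq_cast]
    ring
  rw [this]
  omega

theorem eval_padD (u : List (Letter m)) : wordEval A (padD L c i0 u) = 1 := by
  have hpairs : ∀ j : ℕ, wordEval A
      (List.replicate j [((i0 : Fin m), true), (i0, false)]).flatten = 1 := by
    intro j
    induction j with
    | zero => simp [wordEval]
    | succ j ih =>
        rw [List.replicate_succ, List.flatten_cons, wordEval_append, ih, mul_one]
        simp [wordEval, evalLetter]
  simp only [padD, wordEval_append, hpairs, wordEval_invWord, mul_one, mul_inv_cancel]

/-- the `j`-th segment (0-indexed): block `(jB, (j+1)B]` of `w` followed by the detour. -/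
noncomputable def seg (w : List (Letter m)) (j : ℕ) : List (Letter m) :=
  (w.take ((j+1)*(c+1))).drop (j*(c+1)) ++ padD L c i0 (w.take ((j+1)*(c+1)))

noncomputable def padAux (w : List (Letter m)) (k : ℕ) : List (Letter m) :=
  ((List.range k).map (seg L c i0 w)).flatten

def Kof (w : List (Letter m)) : ℕ := w.length / (c+1) - 1

noncomputable def padW (w : List (Letter m)) : List (Letter m) :=
  padAux L c i0 w (Kof c w) ++ w.drop (Kof c w * (c+1))

theorem padAux_succ (w : List (Letter m)) (k : ℕ) :
    padAux L c i0 w (k+1) = padAux L c i0 w k ++ seg L c i0 w k := by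
  simp [padAux, List.range_succ]

theorem Kof_mul_le (w : List (Letter m)) : Kof c w * (c+1) ≤ w.length := by
  have h1 : Kof c w ≤ w.length / (c+1) := Nat.sub_le _ _
  calc Kof c w * (c+1) ≤ (w.length / (c+1)) * (c+1) :=
        Nat.mul_le_mul_right _ h1
  _ ≤ w.length := Nat.div_mul_le_self _ _

theorem length_lt_Kof (w : List (Letter m)) : w.length < (Kof c w + 2) * (c+1) := by
  have h2 : w.length / (c+1) ≤ Kof c w + 1 := by unfold Kof; omega
  have h3 : w.length < (w.length / (c+1) + 1) * (c+1) := by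
    have hq := Nat.div_add_mod w.length (c+1)
    have hr : w.length % (c+1) < c+1 := Nat.mod_lt _ (by omega)
    have he : (w.length / (c+1) + 1) * (c+1) = (c+1) * (w.length / (c+1)) + (c+1) := by ring
    omega
  calc w.length < (w.length / (c+1) + 1) * (c+1) := h3
  _ ≤ (Kof c w + 2) * (c+1) := Nat.mul_le_mul_right _ (by omega)

theorem eval_padAux (w : List (Letter m)) (k : ℕ) :
    wordEval A (padAux L c i0 w k) = wordEval A (w.take (k*(c+1))) := by
  induction k with
  | zero => simp [padAux, wordEval]
  | succ k ih =>
      rw [padAux_succ, wordEval_append, ih]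
      unfold seg
      rw [wordEval_append, eval_padD, mul_one]
      rw [← wordEval_append]
      congr 1
      have h1 : (w.take ((k+1)*(c+1))).take (k*(c+1)) = w.take (k*(c+1)) := by
        rw [List.take_take]
        congr 1
        have : k*(c+1) ≤ (k+1)*(c+1) := Nat.mul_le_mul_right _ (by omega)
        omega
      conv_rhs => rw [← List.take_append_drop (k*(c+1)) (w.take ((k+1)*(c+1))), h1]

theorem length_padAux {w : List (Letter m)} {k : ℕ} (hk : k ≤ Kof c w) :
    (padAux L c i0 w k).length = k * (3*c+1) := by
  induction k with
  | zero => simp [padAux]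
  | succ k ih =>
      rw [padAux_succ, List.length_append, ih (by omega)]
      have hseg : (seg L c i0 w k).length = 3*c+1 := by
        unfold seg
        have h1 : (k+1)*(c+1) ≤ w.length := by
          calc (k+1)*(c+1) ≤ Kof c w * (c+1) := Nat.mul_le_mul_right _ hk
          _ ≤ w.length := Kof_mul_le c w
        have h2 : k*(c+1) ≤ (k+1)*(c+1) := Nat.mul_le_mul_right _ (by omega)
        have h3 : (k+1)*(c+1) = k*(c+1) + (c+1) := by ring
        rw [List.length_append, length_padD, List.length_drop, List.length_take,
          Nat.min_eq_left h1]
        omega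
      rw [hseg]; ring

theorem eval_padW (w : List (Letter m)) : wordEval A (padW L c i0 w) = wordEval A w := by
  unfold padW
  rw [wordEval_append, eval_padAux, ← wordEval_append, List.take_append_drop]

theorem length_padW (w : List (Letter m)) :
    (padW L c i0 w).length = Kof c w * (3*c+1) + (w.length - Kof c w * (c+1)) := by
  unfold padW
  rw [List.length_append, length_padAux L c i0 (le_refl _), List.length_drop]

theorem padAux_prefix_padAux (w : List (Letter m)) {k j : ℕ} (h : k ≤ j) :
    padAux L c i0 w k <+: padAux L c i0 w j := by
  induction j with
  | zero => rw [Nat.le_zero.mp h]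
  | succ j ih =>
      rcases Nat.lt_or_ge k (j+1) with h' | h'
      · exact (ih (by omega)).trans ⟨seg L c i0 w j, (padAux_succ L c i0 w j).symm⟩
      · have : k = j + 1 := by omega
        rw [this]

theorem padAux_prefix_padW {w : List (Letter m)} {k : ℕ} (hk : k ≤ Kof c w) :
    padAux L c i0 w k <+: padW L c i0 w :=
  (padAux_prefix_padAux L c i0 w hk).trans ⟨_, rfl⟩

theorem padAux_congr {w₁ w₂ : List (Letter m)} {k : ℕ}
    (h : w₁.take (k*(c+1)) = w₂.take (k*(c+1))) :
    padAux L c i0 w₁ k = padAux L c i0 w₂ k := by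
  unfold padAux
  congr 1
  apply List.map_congr_left
  intro j hj
  rw [List.mem_range] at hj
  have htake : w₁.take ((j+1)*(c+1)) = w₂.take ((j+1)*(c+1)) := by
    have hle : (j+1)*(c+1) ≤ k*(c+1) := Nat.mul_le_mul_right _ (by omega)
    calc w₁.take ((j+1)*(c+1)) = (w₁.take (k*(c+1))).take ((j+1)*(c+1)) := by
          rw [List.take_take]; congr 1; omega
    _ = (w₂.take (k*(c+1))).take ((j+1)*(c+1)) := by rw [h]
    _ = w₂.take ((j+1)*(c+1)) := by rw [List.take_take]; congr 1; omega
  unfold seg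
  rw [htake]


/-! ### consistency: canonical prefixes of padded words are padded words -/

theorem take_eq_of_prefix_take {w : List (Letter m)} {a b : ℕ} (hab : a ≤ b) :
    (w.take b).take a = w.take a := by
  rw [List.take_take]; congr 1; omega

theorem consistency (hqr : Quasiregular L c)
    {w : List (Letter m)} (hw : w ∈ L) {k : ℕ} (hk1 : 1 ≤ k) (hk : k ≤ Kof c w) :
    (w.take (k*(c+1)) ++ extQ L c (w.take (k*(c+1))) ∈ L) ∧
    padW L c i0 (w.take (k*(c+1)) ++ extQ L c (w.take (k*(c+1)))) =
      (padW L c i0 w).take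
        ((k-1)*(3*c+1) + ((c+1) + (extQ L c (w.take (k*(c+1)))).length)) := by
  obtain ⟨k', rfl⟩ : ∃ k'', k = k'' + 1 := ⟨k-1, by omega⟩
  set u := w.take ((k'+1)*(c+1)) with hu
  set x := extQ L c u with hxdef
  have hkBn : (k'+1)*(c+1) ≤ w.length :=
    le_trans (Nat.mul_le_mul_right _ hk) (Kof_mul_le c w)
  have hux : u ++ x ∈ L := extQ_mem L c (hqr w hw u (List.take_prefix _ _))
  have hxc : x.length ≤ c := extQ_length L c u
  have hulen : u.length = (k'+1)*(c+1) := by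
    rw [hu, List.length_take]; omega
  have hstep : (k'+1)*(c+1) = k'*(c+1) + (c+1) := by ring
  have h1 : k'*(c+1) ≤ u.length := by omega
  have hKux : Kof c (u ++ x) = k' := by
    unfold Kof
    rw [List.length_append, hulen]
    have hdiv : ((k'+1)*(c+1) + x.length)/(c+1) = k' + 1 := by
      rw [mul_comm, Nat.mul_add_div (by omega)]
      rw [Nat.div_eq_of_lt (by omega)]
    rw [hdiv]
    omega
  have hdropux : (u ++ x).drop (k'*(c+1)) = u.drop (k'*(c+1)) ++ x :=
    List.drop_append_of_le_length h1
  have hcong : padAux L c i0 (u ++ x) k' = padAux L c i0 w k' := by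
    apply padAux_congr
    rw [List.take_append_of_le_length h1, hu, take_eq_of_prefix_take (by omega)]
  have hLHS : padW L c i0 (u ++ x) = padAux L c i0 w k' ++ (u.drop (k'*(c+1)) ++ x) := by
    unfold padW
    rw [hKux, hcong, hdropux]
  -- now the RHS
  have hpre : padAux L c i0 w (k'+1) <+: padW L c i0 w := padAux_prefix_padW L c i0 hk
  rw [padAux_succ] at hpre
  obtain ⟨sfx, hsfx⟩ := hpre
  have hlenAux : (padAux L c i0 w k').length = k' * (3*c+1) :=
    length_padAux L c i0 (by omega)
  have hseg : seg L c i0 w k' = u.drop (k'*(c+1)) ++ (x ++ ((List.replicate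
      (c - x.length) [(i0, true), (i0, false)]).flatten ++ invWord x)) := by
    unfold seg padD
    rw [← hu, ← hxdef]
    simp [List.append_assoc]
  have hdlen : (u.drop (k'*(c+1))).length = c+1 := by
    rw [List.length_drop]; omega
  have hRHS : (padW L c i0 w).take
      ((k'+1-1)*(3*c+1) + ((c+1) + x.length)) =
      padAux L c i0 w k' ++ (u.drop (k'*(c+1)) ++ x) := by
    rw [← hsfx, List.append_assoc]
    have e1 : (k'+1-1)*(3*c+1) + ((c+1) + x.length) =
        (padAux L c i0 w k').length + ((c+1) + x.length) := by
      rw [hlenAux]; congr 1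
    rw [e1, List.take_length_add_append]
    congr 1
    rw [hseg, List.append_assoc]
    have e2 : (c+1) + x.length = (u.drop (k'*(c+1))).length + x.length := by rw [hdlen]
    rw [e2, List.take_length_add_append]
    congr 1
    rw [List.append_assoc x, List.take_append_of_le_length le_rfl,
      List.take_of_length_le le_rfl]
  exact ⟨hux, by rw [hLHS, ← hRHS]⟩


/-! ### tracking lemma -/

theorem tracking (hc : 1 ≤ c) (w : List (Letter m)) (t : ℕ) :
    wordDist A (wordEval A ((padW L c i0 w).take t))
      (wordEval A (w.take ((t / (3*c+1)) * (c+1)))) ≤ 3*c := by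
  have hΛ : 0 < 3*c+1 := by omega
  have hnK : w.length < (Kof c w + 2) * (c+1) := length_lt_Kof c w
  have hKB : Kof c w * (c+1) ≤ w.length := Kof_mul_le c w
  have hexp : (Kof c w + 2) * (c+1) = Kof c w * (c+1) + (2*c+2) := by ring
  rcases lt_or_ge t (padW L c i0 w).length with hlt | hge
  · -- inside the padded word
    have hlen : (padW L c i0 w).length =
        Kof c w * (3*c+1) + (w.length - Kof c w * (c+1)) := length_padW L c i0 w
    set q := t / (3*c+1) with hq
    set r := t % (3*c+1) with hr
    have hk : q ≤ Kof c w := by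
      by_contra hcon
      push_neg at hcon
      have h2 : (Kof c w + 1) * (3*c+1) ≤ q * (3*c+1) := Nat.mul_le_mul_right _ hcon
      have h3 : q * (3*c+1) ≤ t := by
        rw [hq]; exact Nat.div_mul_le_self t (3*c+1)
      have h4 : (Kof c w + 1) * (3*c+1) = Kof c w * (3*c+1) + (3*c+1) := by ring
      omega
    obtain ⟨sfx, hsfx⟩ := padAux_prefix_padW L c i0 hk
    have hlenAux : (padAux L c i0 w q).length = q * (3*c+1) :=
      length_padAux L c i0 hk
    have ht' : t = (padAux L c i0 w q).length + r := by
      rw [hlenAux]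
      have hdm := Nat.div_add_mod t (3*c+1)
      rw [← hq, ← hr] at hdm
      have hcm : (3*c+1) * q = q * (3*c+1) := mul_comm _ _
      omega
    rw [← hsfx, ht', List.take_length_add_append, wordEval_append, eval_padAux]
    have hd := wordDist_mul_le A (wordEval A (w.take (q * (c+1)))) (sfx.take r)
    refine le_trans hd ?_
    have hmod : r < 3*c+1 := by rw [hr]; exact Nat.mod_lt _ hΛ
    have := List.length_take_le r sfx
    omega
  · -- past the end of the padded word
    rw [List.take_of_length_le hge, eval_padW]
    have hkK : Kof c w ≤ t / (3*c+1) := by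
      apply (Nat.le_div_iff_mul_le hΛ).mpr
      have hlen : (padW L c i0 w).length =
        Kof c w * (3*c+1) + (w.length - Kof c w * (c+1)) := length_padW L c i0 w
      omega
    rcases le_or_gt w.length ((t / (3*c+1)) * (c+1)) with hbig | hsmall
    · rw [List.take_of_length_le hbig, wordDist_self]
      omega
    · have hsplit := wordEval_append A (w.take ((t / (3*c+1)) * (c+1)))
        (w.drop ((t / (3*c+1)) * (c+1)))
      rw [List.take_append_drop] at hsplit
      have hz : wordEval A (invWord (w.drop ((t / (3*c+1)) * (c+1)))) =
          (wordEval A w)⁻¹ * wordEval A (w.take ((t / (3*c+1)) * (c+1))) := by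
        rw [wordEval_invWord, hsplit, mul_inv_rev, inv_mul_cancel_right]
      refine le_trans (wordDist_le A hz) ?_
      rw [length_invWord, List.length_drop]
      have : Kof c w * (c+1) ≤ (t / (3*c+1)) * (c+1) := Nat.mul_le_mul_right _ hkK
      omega

/-! ### density of canonical prefixes -/

theorem density (hc : 1 ≤ c) (hL : IsNormalForm A L) (hqr : Quasiregular L c) (g : G)
    {t : ℕ} (ht : t ≤ (padW L c i0 (rep A hL g)).length) :
    ∃ p, t ≤ p ∧ p ≤ t + 4*c ∧
      (padW L c i0 (rep A hL g)).take p ∈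
        Set.range (fun g : G => padW L c i0 (rep A hL g)) := by
  set w := rep A hL g with hwdef
  have hw : w ∈ L := rep_mem A hL g
  have hΛ : 0 < 3*c+1 := by omega
  set k0 := (t + 5*c) / (3*c+1) with hk0
  have hdm := Nat.div_add_mod (t + 5*c) (3*c+1)
  rw [← hk0] at hdm
  have hmod : (t + 5*c) % (3*c+1) < 3*c+1 := Nat.mod_lt _ hΛ
  have hcm : (3*c+1) * k0 = k0 * (3*c+1) := mul_comm _ _
  have hX1 : t + 2*c ≤ k0 * (3*c+1) := by omega
  have hX2 : k0 * (3*c+1) ≤ t + 5*c := by omega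
  have hk01 : 1 ≤ k0 := by
    rcases Nat.eq_zero_or_pos k0 with h0 | h1
    · rw [h0] at hX1; simp at hX1; omega
    · exact h1
  rcases le_or_gt k0 (Kof c w) with hkK | hkK
  · -- use the canonical prefix at block k0
    obtain ⟨hux, heq⟩ := consistency L c i0 hqr hw hk01 hkK
    set x := extQ L c (w.take (k0*(c+1))) with hxdef
    have hxc : x.length ≤ c := extQ_length L c _
    obtain ⟨k'', hk''⟩ : ∃ k'', k0 = k'' + 1 := ⟨k0 - 1, by omega⟩
    have ha1 : (k0-1)*(3*c+1) = k''*(3*c+1) := by rw [hk'']; simp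
    have ha2 : k0*(3*c+1) = k''*(3*c+1) + (3*c+1) := by rw [hk'']; ring
    refine ⟨(k0-1)*(3*c+1) + ((c+1) + x.length), by omega, by omega, ?_⟩
    rw [← heq]
    have hre : w.take (k0*(c+1)) ++ x = rep A hL (wordEval A (w.take (k0*(c+1)) ++ x)) :=
      rep_unique A hL hux rfl
    refine ⟨wordEval A (w.take (k0*(c+1)) ++ x), ?_⟩
    show padW L c i0 (rep A hL _) = _
    rw [← hre]
  · -- the end of the word is close
    refine ⟨(padW L c i0 w).length, ht, ?_, ?_⟩
    · have hlen : (padW L c i0 w).length =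
        Kof c w * (3*c+1) + (w.length - Kof c w * (c+1)) := length_padW L c i0 w
      have hnK : w.length < (Kof c w + 2) * (c+1) := length_lt_Kof c w
      have hexp : (Kof c w + 2) * (c+1) = Kof c w * (c+1) + (2*c+2) := by ring
      have hKB : Kof c w * (c+1) ≤ w.length := Kof_mul_le c w
      have hKk0 : Kof c w + 1 ≤ k0 := hkK
      have h2 : (Kof c w + 1) * (3*c+1) ≤ k0 * (3*c+1) := Nat.mul_le_mul_right _ hKk0
      have h3 : (Kof c w + 1) * (3*c+1) = Kof c w * (3*c+1) + (3*c+1) := by ring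
      omega
    · rw [List.take_of_length_le le_rfl]
      exact ⟨g, rfl⟩


/-! ### fellow-traveler function comparison -/

def ftSet (L₀ : Set (List (Letter m))) (n : ℕ) : Set ℕ :=
  {d | ∃ t ≤ n, ∃ w₁ ∈ L₀, ∃ w₂ ∈ L₀, ∃ i : Fin m,
    wordEval A w₁ * A i = wordEval A w₂ ∧
    d = wordDist A (wordEval A (w₁.take t)) (wordEval A (w₂.take t))}

theorem ftFun_eq_sSup (L₀ : Set (List (Letter m))) (n : ℕ) :
    ftFun A L₀ n = sSup (ftSet A L₀ n) := rfl

theorem ftSet_le (L₀ : Set (List (Letter m))) (n : ℕ) {d : ℕ} (hd : d ∈ ftSet A L₀ n) :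
    d ≤ 2 * n := by
  obtain ⟨t, ht, w₁, _, w₂, _, i, _, rfl⟩ := hd
  have hz : wordEval A (invWord (w₁.take t) ++ w₂.take t) =
      (wordEval A (w₁.take t))⁻¹ * wordEval A (w₂.take t) := by
    rw [wordEval_append, wordEval_invWord]
  refine le_trans (wordDist_le A hz) ?_
  rw [List.length_append, length_invWord]
  have := List.length_take_le t w₁
  have := List.length_take_le t w₂
  omega

theorem ftSet_bddAbove (L₀ : Set (List (Letter m))) (n : ℕ) : BddAbove (ftSet A L₀ n) :=
  ⟨2*n, fun _ hd => ftSet_le A L₀ n hd⟩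

theorem le_ftFun {L₀ : Set (List (Letter m))} {n d : ℕ} (hd : d ∈ ftSet A L₀ n) :
    d ≤ ftFun A L₀ n :=
  le_csSup (ftSet_bddAbove A L₀ n) hd

theorem ftFun_padW_le (hc : 1 ≤ c) (hL : IsNormalForm A L) (n : ℕ) :
    ftFun A (Set.range (fun g : G => padW L c i0 (rep A hL g))) n ≤ ftFun A L n + 6*c := by
  have hsurj : ∀ g : G, ∃ v : List (Letter m), wordEval A v = g :=
    fun g => ⟨rep A hL g, rep_eval A hL g⟩
  rw [ftFun_eq_sSup]
  apply csSup_le'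
  rintro d ⟨t, ht, w₁', ⟨g₁, rfl⟩, w₂', ⟨g₂, rfl⟩, i, hrel, rfl⟩
  simp only at hrel ⊢
  set w₁ := rep A hL g₁ with hw₁
  set w₂ := rep A hL g₂ with hw₂
  set τ := (t / (3*c+1)) * (c+1) with hτ
  have h1 := tracking A L c i0 hc w₁ t
  have h2 := tracking A L c i0 hc w₂ t
  rw [← hτ] at h1 h2
  have hττ : τ ≤ n := by
    have ha : τ ≤ (t / (3*c+1)) * (3*c+1) := Nat.mul_le_mul_left _ (by omega)
    have hb : (t / (3*c+1)) * (3*c+1) ≤ t := Nat.div_mul_le_self t (3*c+1)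
    omega
  have hmid : wordDist A (wordEval A (w₁.take τ)) (wordEval A (w₂.take τ)) ≤ ftFun A L n := by
    apply le_ftFun A
    refine ⟨τ, hττ, w₁, rep_mem A hL g₁, w₂, rep_mem A hL g₂, i, ?_, rfl⟩
    rw [← eval_padW A L c i0 w₁, ← eval_padW A L c i0 w₂]
    exact hrel
  have htr1 : wordDist A (wordEval A ((padW L c i0 w₁).take t))
      (wordEval A ((padW L c i0 w₂).take t)) ≤
      wordDist A (wordEval A ((padW L c i0 w₁).take t)) (wordEval A (w₁.take τ)) +
      (wordDist A (wordEval A (w₁.take τ)) (wordEval A (w₂.take τ)) +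
       wordDist A (wordEval A (w₂.take τ)) (wordEval A ((padW L c i0 w₂).take t))) :=
    le_trans (wordDist_triangle A hsurj _ _ _)
      (by gcongr; exact wordDist_triangle A hsurj _ _ _)
  have hsym : wordDist A (wordEval A (w₂.take τ)) (wordEval A ((padW L c i0 w₂).take t)) =
      wordDist A (wordEval A ((padW L c i0 w₂).take t)) (wordEval A (w₂.take τ)) :=
    wordDist_symm A hsurj _ _
  rw [hsym] at htr1
  omega

/-! ### degenerate cases -/

theorem all_one_contra [Infinite G] (hL : IsNormalForm A L)
    (hone : ∀ i : Fin m, A i = 1) : False := by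
  have heval : ∀ v : List (Letter m), wordEval A v = 1 := by
    intro v
    induction v with
    | nil => rfl
    | cons a v ih =>
        have : wordEval A (a :: v) = evalLetter A a * wordEval A v := by simp [wordEval]
        rw [this, ih, mul_one]
        cases h : a.2 <;> simp [evalLetter, h, hone a.1]
  have : ∀ g : G, g = 1 := fun g => by rw [← rep_eval A hL g, heval]
  obtain ⟨a, b, hab⟩ := exists_pair_ne G
  exact hab ((this a).trans (this b).symm)

theorem f_zero_contra [Infinite G] (hL : IsNormalForm A L) {f : ℕ → ℝ}
    (hftp : FPreceq (fun n => (ftFun A L n : ℝ)) f) (hf0 : ∀ n, f n = 0) : False := by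
  obtain ⟨K, M, N₀, hK, hM, hb⟩ := hftp
  have hzero : ∀ n ≥ N₀, ftFun A L n = 0 := by
    intro n hn
    have h1 := hb n hn
    rw [hf0] at h1
    simp only [mul_zero] at h1
    have h2 : (ftFun A L n : ℝ) = 0 := le_antisymm h1 (by positivity)
    exact_mod_cast h2
  apply all_one_contra A L hL
  intro i
  set w₁ := rep A hL 1 with hw₁
  set w₂ := rep A hL (A i) with hw₂
  set t := max w₁.length w₂.length with htdef
  set n := max t N₀ with hndef
  have hd : wordDist A 1 (A i) ∈ ftSet A L n := by
    refine ⟨t, le_max_left _ _, w₁, rep_mem A hL 1, w₂, rep_mem A hL (A i), i, ?_, ?_⟩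
    · rw [rep_eval, rep_eval, one_mul]
    · rw [List.take_of_length_le (le_max_left _ _), List.take_of_length_le (le_max_right _ _),
        rep_eval, rep_eval]
  have hle : wordDist A 1 (A i) ≤ ftFun A L n := le_ftFun A hd
  rw [hzero n (le_max_right _ _)] at hle
  have hex := wordDist_exists A (fun g => ⟨rep A hL g, rep_eval A hL g⟩) 1 (A i)
  obtain ⟨z, hz, hzl⟩ := hex
  have : z = [] := List.length_eq_zero_iff.mp (by omega)
  rw [this] at hz
  simpa [wordEval_nil] using hz.symm


end QRQPC

/-- Suppose `L ⊆ S*` defines a quasiregular normal form of `G` with constant `c ≥ 0`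
which satisfies the `f(n)`-fellow traveler property (`f` nondecreasing, `f ≪ 𝔦`,
and `s ⪯ f`). Then there is a language `L' ⊆ S*` defining a quasiprefix-closed
normal form of `G` with constant `C = 4c` that also satisfies the `f(n)`-fellow
traveler property. -/
theorem quasiregular_to_quasiprefixClosed {G : Type*} [Group G] [Infinite G] {m : ℕ}
    (A : Fin m → G) (L : Set (List (Letter m))) (hL : IsNormalForm A L)
    (c : ℕ) (hqr : Quasiregular L c)
    (f : ℕ → ℝ) (hmono : Monotone f) (hnonneg : ∀ n, 0 ≤ f n)
    (hll : FLl f (fun n => (n : ℝ)))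
    (hftp : FPreceq (fun n => (ftFun A L n : ℝ)) f) :
    ∃ L' : Set (List (Letter m)), IsNormalForm A L' ∧ QuasiPrefixClosed L' (4 * c) ∧
      FPreceq (fun n => (ftFun A L' n : ℝ)) f := by
  classical
  rcases Nat.eq_zero_or_pos c with hc0 | hc
  · -- c = 0 : L is already prefix-closed
    subst hc0
    refine ⟨L, hL, ?_, hftp⟩
    intro u v huv
    obtain ⟨x, hxl, hx⟩ := hqr (u ++ v) huv u ⟨v, rfl⟩
    have hx0 : x = [] := List.length_eq_zero_iff.mp (by omega)
    rw [hx0, List.append_nil] at hx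
    exact ⟨[], List.nil_prefix, by simp, by rw [List.append_nil]; exact hx⟩
  rcases Nat.eq_zero_or_pos m with hm0 | hm
  · exact (QRQPC.all_one_contra A L hL (fun i => absurd i.isLt (by omega))).elim
  -- main case : c ≥ 1, m ≥ 1
  set i0 : Fin m := ⟨0, hm⟩ with hi0
  set L' := Set.range (fun g : G => QRQPC.padW L c i0 (QRQPC.rep A hL g)) with hL'
  have hL'nf : IsNormalForm A L' := by
    intro g
    refine ⟨QRQPC.padW L c i0 (QRQPC.rep A hL g), ⟨⟨g, rfl⟩, ?_⟩, ?_⟩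
    · rw [QRQPC.eval_padW, QRQPC.rep_eval]
    · rintro w ⟨⟨g', rfl⟩, hev⟩
      simp only at hev ⊢
      rw [QRQPC.eval_padW, QRQPC.rep_eval] at hev
      rw [hev]
  refine ⟨L', hL'nf, ?_, ?_⟩
  · -- quasiprefix-closedness with constant 4c
    intro u v huv
    obtain ⟨g, hg⟩ := huv
    simp only at hg
    have ht : u.length ≤ (QRQPC.padW L c i0 (QRQPC.rep A hL g)).length := by
      rw [hg, List.length_append]; omega
    obtain ⟨p, hp1, hp2, hp3⟩ := QRQPC.density A L c i0 hc hL hqr g ht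
    refine ⟨v.take (p - u.length), List.take_prefix _ _, ?_, ?_⟩
    · have := List.length_take_le (p - u.length) v
      omega
    · have he : u ++ v.take (p - u.length) =
          (QRQPC.padW L c i0 (QRQPC.rep A hL g)).take p := by
        rw [hg]
        have hp : p = u.length + (p - u.length) := by omega
        conv_rhs => rw [hp]
        rw [List.take_length_add_append]
      rw [he, hL']
      exact hp3
  · -- the fellow traveler property
    have hcomp : ∀ n, ftFun A L' n ≤ ftFun A L n + 6*c := by
      intro n
      rw [hL']
      exact QRQPC.ftFun_padW_le A L c i0 hc hL n
    obtain ⟨K₀, M₀, N₀, hK₀, hM₀, hb⟩ := hftp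
    have hfex : ∃ n₁, 0 < f n₁ := by
      by_contra hno
      push_neg at hno
      exact QRQPC.f_zero_contra A L hL ⟨K₀, M₀, N₀, hK₀, hM₀, hb⟩
        (fun n => le_antisymm (hno n) (hnonneg n))
    obtain ⟨n₁, hn₁⟩ := hfex
    refine ⟨K₀ + Nat.ceil ((6*c : ℝ) / f n₁), M₀, max N₀ n₁,
      by omega, hM₀, ?_⟩
    intro n hn
    have hn₀ : n ≥ N₀ := le_trans (le_max_left _ _) hn
    have hnM : n ≤ M₀ * n := by
      calc n = 1 * n := (one_mul n).symm
      _ ≤ M₀ * n := Nat.mul_le_mul_right n hM₀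
    have hnn₁ : n₁ ≤ M₀ * n := le_trans (le_trans (le_max_right _ _) hn) hnM
    have hf1 : f n₁ ≤ f (M₀ * n) := hmono hnn₁
    have h6 : (6*c : ℝ) ≤ (Nat.ceil ((6*c:ℝ)/f n₁) : ℝ) * f (M₀ * n) := by
      have hceil : (6*c:ℝ)/f n₁ ≤ (Nat.ceil ((6*c:ℝ)/f n₁) : ℝ) := Nat.le_ceil _
      rw [div_le_iff₀ hn₁] at hceil
      calc (6*c:ℝ) ≤ (Nat.ceil ((6*c:ℝ)/f n₁) : ℝ) * f n₁ := hceil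
      _ ≤ (Nat.ceil ((6*c:ℝ)/f n₁) : ℝ) * f (M₀ * n) := by gcongr
    have hcn : (ftFun A L' n : ℝ) ≤ (ftFun A L n : ℝ) + 6*c := by
      have := hcomp n
      push_cast
      exact_mod_cast this
    have hLn := hb n hn₀
    simp only at hLn
    push_cast
    calc (ftFun A L' n : ℝ) ≤ (ftFun A L n : ℝ) + 6*c := hcn
    _ ≤ (K₀ : ℝ) * f (M₀*n) + (Nat.ceil ((6*c:ℝ)/f n₁) : ℝ) * f (M₀*n) := by linarith
    _ = ((K₀ : ℝ) + (Nat.ceil ((6*c:ℝ)/f n₁) : ℝ)) * f (M₀*n) := by ring
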